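/- For all integers 1 ≤ j ≤ k with k − j ≤ τ, the momentum-compensated point w^j := x^j + ( Σ_{i=j}^{k} b(j, i) ) (x^j − x^{j−1}) satisfies ‖w^j − y^k‖² ≤ ((τ² + 3τ)/2) · Σ_{i=1}^{min(τ, k)} (i + 1) ‖x^{k−i+1} − y^{k−i}‖². -/

import Mathlib

lemma momentum_lemA {H : Type*} [NormedAddCommGroup H] [InnerProductSpace ℝ H]
    (x y : ℕ → H) (a : ℕ → ℝ)
    (hrec : ∀ k, 1 ≤ k → y k = x k + a k • (x k - x (k - 1)))
    (j : ℕ) (hj : 1 ≤ j) :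
    ∀ K, j ≤ K → x (K+1) - x K =
      (∑ m ∈ Finset.Icc (j+1) (K+1), (∏ i ∈ Finset.Icc m K, a i) • (x m - y (m-1)))
        + (∏ i ∈ Finset.Icc j K, a i) • (x j - x (j-1)) := by
  intro K hK
  induction K, hK using Nat.le_induction with
  | base =>
      have h1 : y j = x j + a j • (x j - x (j-1)) := hrec j hj
      rw [show Finset.Icc (j+1) (j+1) = {j+1} from Finset.Icc_self _, Finset.sum_singleton,
        show Finset.Icc (j+1) j = ∅ from Finset.Icc_eq_empty (by omega),
        show Finset.Icc j j = {j} from Finset.Icc_self _, Finset.prod_empty, Finset.prod_singleton,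
        one_smul, show j + 1 - 1 = j by omega, h1]
      abel
  | succ K hK ih =>
      have h1 : y (K+1) = x (K+1) + a (K+1) • (x (K+1) - x K) := by
        have := hrec (K+1) (by omega)
        simpa using this
      rw [Finset.sum_Icc_succ_top (show j+1 ≤ K+2 by omega),
        Finset.prod_Icc_succ_top (show j ≤ K+1 by omega)]
      have h2 : ∀ m ∈ Finset.Icc (j+1) (K+1),
          (∏ i ∈ Finset.Icc m (K+1), a i) • (x m - y (m-1))
            = a (K+1) • ((∏ i ∈ Finset.Icc m K, a i) • (x m - y (m-1))) := by
        intro m hm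
        rw [Finset.prod_Icc_succ_top (by simp [Finset.mem_Icc] at hm; omega), mul_comm, mul_smul]
      rw [Finset.sum_congr rfl h2, ← Finset.smul_sum,
        show Finset.Icc (K+2) (K+1) = ∅ from Finset.Icc_eq_empty (by omega)]
      simp only [Finset.prod_empty, one_smul]
      have h3 : (∑ m ∈ Finset.Icc (j+1) (K+1), (∏ i ∈ Finset.Icc m K, a i) • (x m - y (m-1)))
          = (x (K+1) - x K) - (∏ i ∈ Finset.Icc j K, a i) • (x j - x (j-1)) := by
        rw [ih]; abel
      rw [h3, show K + 2 - 1 = K + 1 by omega, h1]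
      module

lemma momentum_lemB {H : Type*} [NormedAddCommGroup H] [InnerProductSpace ℝ H]
    (x y : ℕ → H) (a : ℕ → ℝ)
    (hrec : ∀ k, 1 ≤ k → y k = x k + a k • (x k - x (k - 1)))
    (j : ℕ) (hj : 1 ≤ j) :
    ∀ K, j ≤ K →
      y K - x j - (∑ i ∈ Finset.Icc j K, ∏ l ∈ Finset.Icc j i, a l) • (x j - x (j-1))
        = ∑ m ∈ Finset.Icc (j+1) K,
            (1 + ∑ i ∈ Finset.Icc m K, ∏ l ∈ Finset.Icc m i, a l) • (x m - y (m-1)) := by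
  intro K hK
  induction K, hK using Nat.le_induction with
  | base =>
      rw [show Finset.Icc (j+1) j = ∅ from Finset.Icc_eq_empty (by omega), Finset.sum_empty,
        show Finset.Icc j j = {j} from Finset.Icc_self _, Finset.sum_singleton,
        show Finset.Icc j j = {j} from Finset.Icc_self _, Finset.prod_singleton, hrec j hj]
      abel
  | succ K hK ih =>
      have h1 : y (K+1) = x (K+1) + a (K+1) • (x (K+1) - x K) := by
        have := hrec (K+1) (by omega); simpa using this
      have hA := momentum_lemA x y a hrec j hj K hK
      have hr : ∀ S P : ℝ, (1 + (S + P * a (K+1))) = (1 + S) + a (K+1) * P := by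
        intro S P; ring
      have h2 : ∀ m ∈ Finset.Icc (j+1) (K+1),
          (1 + ∑ i ∈ Finset.Icc m (K+1), ∏ l ∈ Finset.Icc m i, a l) • (x m - y (m-1))
            = (1 + ∑ i ∈ Finset.Icc m K, ∏ l ∈ Finset.Icc m i, a l) • (x m - y (m-1))
              + a (K+1) • ((∏ l ∈ Finset.Icc m K, a l) • (x m - y (m-1))) := by
        intro m hm
        have hm' : m ≤ K + 1 := by simp [Finset.mem_Icc] at hm; omega
        rw [Finset.sum_Icc_succ_top hm', Finset.prod_Icc_succ_top hm', hr, add_smul, mul_smul]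
      rw [Finset.sum_congr rfl h2, Finset.sum_add_distrib, ← Finset.smul_sum,
        Finset.sum_Icc_succ_top (show j+1 ≤ K+1 by omega),
        show Finset.Icc (K+1) K = ∅ from Finset.Icc_eq_empty (by omega), Finset.sum_empty,
        ← ih]
      have h3 : (∑ m ∈ Finset.Icc (j+1) (K+1), (∏ i ∈ Finset.Icc m K, a i) • (x m - y (m-1)))
          = (x (K+1) - x K) - (∏ i ∈ Finset.Icc j K, a i) • (x j - x (j-1)) := by
        rw [hA]; abel
      rw [h3, Finset.sum_Icc_succ_top (show j ≤ K+1 by omega),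
        Finset.prod_Icc_succ_top (show j ≤ K+1 by omega),
        show K + 1 - 1 = K by omega, h1]
      module

lemma momentum_cs_aux {H : Type*} [NormedAddCommGroup H] [InnerProductSpace ℝ H]
    (c : ℕ → ℝ) (e : ℕ → H) (s : Finset ℕ) (hc0 : ∀ m ∈ s, 0 ≤ c m) :
    ‖∑ m ∈ s, c m • e m‖^2 ≤ (∑ m ∈ s, c m) * ∑ m ∈ s, c m * ‖e m‖^2 := by
  have h1 : ‖∑ m ∈ s, c m • e m‖ ≤ ∑ m ∈ s, c m * ‖e m‖ := by
    refine (norm_sum_le _ _).trans (le_of_eq (Finset.sum_congr rfl fun m hm => ?_))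
    rw [norm_smul, Real.norm_eq_abs, abs_of_nonneg (hc0 m hm)]
  have h2 := Finset.sum_mul_sq_le_sq_mul_sq s (fun m => Real.sqrt (c m))
    (fun m => Real.sqrt (c m) * ‖e m‖)
  calc ‖∑ m ∈ s, c m • e m‖^2 ≤ (∑ m ∈ s, c m * ‖e m‖)^2 :=
        pow_le_pow_left₀ (norm_nonneg _) h1 2
    _ = (∑ m ∈ s, Real.sqrt (c m) * (Real.sqrt (c m) * ‖e m‖))^2 := by
        congr 1
        exact Finset.sum_congr rfl fun m hm => by
          rw [← mul_assoc, Real.mul_self_sqrt (hc0 m hm)]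
    _ ≤ (∑ m ∈ s, Real.sqrt (c m)^2) * ∑ m ∈ s, (Real.sqrt (c m) * ‖e m‖)^2 := h2
    _ = (∑ m ∈ s, c m) * ∑ m ∈ s, c m * ‖e m‖^2 := by
        congr 1
        · exact Finset.sum_congr rfl fun m hm => Real.sq_sqrt (hc0 m hm)
        · exact Finset.sum_congr rfl fun m hm => by rw [mul_pow, Real.sq_sqrt (hc0 m hm)]

lemma momentum_gauss (n : ℕ) :
    ∑ i ∈ Finset.Icc 1 n, ((i : ℝ) + 1) = ((n : ℝ)^2 + 3*n)/2 := by
  induction n with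
  | zero => simp
  | succ n ih =>
      rw [Finset.sum_Icc_succ_top (by omega), ih]
      push_cast; ring


/-- Bound on the distance between the momentum-compensated point
`w^j = x^j + (Σ_{i=j}^{k} b(j,i))(x^j − x^{j−1})` and the exact extrapolation point `y^k`:
for `1 ≤ j ≤ k` with `k − j ≤ τ`,
`‖w^j − y^k‖² ≤ ((τ²+3τ)/2) Σ_{i=1}^{min(τ,k)} (i+1) ‖x^{k−i+1} − y^{k−i}‖²`. -/
theorem momentum_compensation_distance_bound
    {H : Type*} [NormedAddCommGroup H] [InnerProductSpace ℝ H]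
    (x y : ℕ → H) (τ : ℕ) (hτ : 1 ≤ τ)
    (a : ℕ → ℝ) (ha : ∀ k, 1 ≤ k → 0 ≤ a k ∧ a k ≤ 1)
    (hrec : ∀ k, 1 ≤ k → y k = x k + a k • (x k - x (k - 1)))
    (b : ℕ → ℕ → ℝ) (hb : ∀ l k, b l k = ∏ i ∈ Finset.Icc l k, a i) :
    ∀ j k : ℕ, 1 ≤ j → j ≤ k → k - j ≤ τ →
      ‖(x j + (∑ i ∈ Finset.Icc j k, b j i) • (x j - x (j - 1))) - y k‖ ^ 2
        ≤ ((τ : ℝ) ^ 2 + 3 * τ) / 2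
            * ∑ i ∈ Finset.Icc 1 (min τ k), ((i : ℝ) + 1) * ‖x (k - i + 1) - y (k - i)‖ ^ 2 := by
  intro j k hj hjk hkτ
  have hb' : (∑ i ∈ Finset.Icc j k, b j i)
      = ∑ i ∈ Finset.Icc j k, ∏ l ∈ Finset.Icc j i, a l :=
    Finset.sum_congr rfl (fun i _ => hb j i)
  have hB := momentum_lemB x y a hrec j hj k hjk
  have hw : (x j + (∑ i ∈ Finset.Icc j k, b j i) • (x j - x (j - 1))) - y k
      = -(∑ m ∈ Finset.Icc (j+1) k,
          (1 + ∑ i ∈ Finset.Icc m k, ∏ l ∈ Finset.Icc m i, a l) • (x m - y (m-1))) := by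
    rw [hb', ← hB]; abel
  -- coefficient bounds
  have hc0 : ∀ m ∈ Finset.Icc (j+1) k,
      (0:ℝ) ≤ 1 + ∑ i ∈ Finset.Icc m k, ∏ l ∈ Finset.Icc m i, a l := by
    intro m hm
    simp only [Finset.mem_Icc] at hm
    have : (0:ℝ) ≤ ∑ i ∈ Finset.Icc m k, ∏ l ∈ Finset.Icc m i, a l := by
      refine Finset.sum_nonneg fun i hi => Finset.prod_nonneg fun l hl => ?_
      simp only [Finset.mem_Icc] at hl
      exact (ha l (by omega)).1
    linarith
  have hc1 : ∀ m ∈ Finset.Icc (j+1) k,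
      1 + (∑ i ∈ Finset.Icc m k, ∏ l ∈ Finset.Icc m i, a l) ≤ (k:ℝ) - m + 2 := by
    intro m hm
    simp only [Finset.mem_Icc] at hm
    have h1 : (∑ i ∈ Finset.Icc m k, ∏ l ∈ Finset.Icc m i, a l)
        ≤ (Finset.Icc m k).card • (1:ℝ) := by
      refine Finset.sum_le_card_nsmul _ _ _ fun i hi => ?_
      refine Finset.prod_le_one (fun l hl => ?_) (fun l hl => ?_) <;>
        · simp only [Finset.mem_Icc] at hl
          first
          | exact (ha l (by omega)).1
          | exact (ha l (by omega)).2
    rw [Nat.card_Icc, nsmul_eq_mul, mul_one] at h1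
    have h2 : ((k + 1 - m : ℕ) : ℝ) = (k:ℝ) - m + 1 := by
      have : (m:ℝ) ≤ k := by exact_mod_cast hm.2
      push_cast [Nat.cast_sub (by omega : m ≤ k + 1)]
      ring
    rw [h2] at h1
    linarith
  -- reindexing
  have reindex : ∀ F : ℕ → ℝ,
      ∑ m ∈ Finset.Icc (j+1) k, F m = ∑ i ∈ Finset.Icc 1 (k-j), F (k-i+1) := by
    intro F
    refine Finset.sum_nbij' (fun m => k - m + 1) (fun i => k - i + 1) ?_ ?_ ?_ ?_ ?_
    · intro m hm; simp only [Finset.mem_Icc] at hm ⊢; omega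
    · intro i hi; simp only [Finset.mem_Icc] at hi ⊢; omega
    · intro m hm; simp only [Finset.mem_Icc] at hm; omega
    · intro i hi; simp only [Finset.mem_Icc] at hi; omega
    · intro m hm; simp only [Finset.mem_Icc] at hm; congr 1; omega
  have hcast : ∀ i ∈ Finset.Icc 1 (k-j), ((k:ℝ) - (k-i+1 : ℕ) + 2) = (i:ℝ) + 1 := by
    intro i hi
    simp only [Finset.mem_Icc] at hi
    have hik : i ≤ k := by omega
    push_cast [Nat.cast_sub hik]
    ring
  -- sum 1 bound
  have hsum1 : (∑ m ∈ Finset.Icc (j+1) k,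
      (1 + ∑ i ∈ Finset.Icc m k, ∏ l ∈ Finset.Icc m i, a l)) ≤ ((τ:ℝ)^2 + 3*τ)/2 := by
    calc (∑ m ∈ Finset.Icc (j+1) k, (1 + ∑ i ∈ Finset.Icc m k, ∏ l ∈ Finset.Icc m i, a l))
        ≤ ∑ m ∈ Finset.Icc (j+1) k, ((k:ℝ) - m + 2) := Finset.sum_le_sum hc1
      _ = ∑ i ∈ Finset.Icc 1 (k-j), ((k:ℝ) - (k-i+1 : ℕ) + 2) := reindex _
      _ = ∑ i ∈ Finset.Icc 1 (k-j), ((i:ℝ) + 1) := Finset.sum_congr rfl hcast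
      _ ≤ ∑ i ∈ Finset.Icc 1 τ, ((i:ℝ) + 1) := by
          refine Finset.sum_le_sum_of_subset_of_nonneg
            (Finset.Icc_subset_Icc_right hkτ) fun i _ _ => by positivity
      _ = ((τ:ℝ)^2 + 3*τ)/2 := momentum_gauss τ
  -- sum 2 bound
  have hsum2 : (∑ m ∈ Finset.Icc (j+1) k,
      (1 + ∑ i ∈ Finset.Icc m k, ∏ l ∈ Finset.Icc m i, a l) * ‖x m - y (m-1)‖^2)
      ≤ ∑ i ∈ Finset.Icc 1 (min τ k), ((i:ℝ) + 1) * ‖x (k - i + 1) - y (k - i)‖ ^ 2 := by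
    calc (∑ m ∈ Finset.Icc (j+1) k,
        (1 + ∑ i ∈ Finset.Icc m k, ∏ l ∈ Finset.Icc m i, a l) * ‖x m - y (m-1)‖^2)
        ≤ ∑ m ∈ Finset.Icc (j+1) k, ((k:ℝ) - m + 2) * ‖x m - y (m-1)‖^2 :=
          Finset.sum_le_sum fun m hm =>
            mul_le_mul_of_nonneg_right (hc1 m hm) (by positivity)
      _ = ∑ i ∈ Finset.Icc 1 (k-j), ((k:ℝ) - (k-i+1 : ℕ) + 2) * ‖x (k-i+1) - y (k-i+1-1)‖^2 :=
          reindex _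
      _ = ∑ i ∈ Finset.Icc 1 (k-j), ((i:ℝ) + 1) * ‖x (k-i+1) - y (k-i)‖^2 := by
          refine Finset.sum_congr rfl fun i hi => ?_
          rw [hcast i hi, show k - i + 1 - 1 = k - i by omega]
      _ ≤ ∑ i ∈ Finset.Icc 1 (min τ k), ((i:ℝ) + 1) * ‖x (k - i + 1) - y (k - i)‖ ^ 2 := by
          refine Finset.sum_le_sum_of_subset_of_nonneg
            (Finset.Icc_subset_Icc_right (by omega)) fun i _ _ => by positivity
  have hmain := momentum_cs_aux
    (fun m => 1 + ∑ i ∈ Finset.Icc m k, ∏ l ∈ Finset.Icc m i, a l)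
    (fun m => x m - y (m-1)) (Finset.Icc (j+1) k) hc0
  calc ‖(x j + (∑ i ∈ Finset.Icc j k, b j i) • (x j - x (j - 1))) - y k‖ ^ 2
      = ‖∑ m ∈ Finset.Icc (j+1) k,
          (1 + ∑ i ∈ Finset.Icc m k, ∏ l ∈ Finset.Icc m i, a l) • (x m - y (m-1))‖^2 := by
        rw [hw, norm_neg]
    _ ≤ (∑ m ∈ Finset.Icc (j+1) k, (1 + ∑ i ∈ Finset.Icc m k, ∏ l ∈ Finset.Icc m i, a l))
          * ∑ m ∈ Finset.Icc (j+1) k,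
              (1 + ∑ i ∈ Finset.Icc m k, ∏ l ∈ Finset.Icc m i, a l) * ‖x m - y (m-1)‖^2 :=
        hmain
    _ ≤ ((τ:ℝ)^2 + 3*τ)/2
          * ∑ i ∈ Finset.Icc 1 (min τ k), ((i:ℝ) + 1) * ‖x (k - i + 1) - y (k - i)‖ ^ 2 := by
        refine mul_le_mul hsum1 hsum2 ?_ (by positivity)
        exact Finset.sum_nonneg fun m hm => mul_nonneg (hc0 m hm) (by positivity)
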